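/- Let β : ℝ → [0,∞) be bounded, even, integrable, decreasing on [0,∞), and satisfy β(2^j x) ≤ 2^{4−j} β(x) for all |x| ≥ 1 and all integers j ≥ 0. Then for every integer k ≥ 0 there is a constant C = C(k, β) such that for every family {I_{rl}}_{(r,l)∈S'} of dyadic intervals with pairwise disjoint interiors in which every index satisfies r ≥ 0, one has ∫_ℝ β(t) ( Σ_{(r,l)∈S'} β(2^r t − l) )^k dt ≤ C. -/

import Mathlib

open MeasureTheory Set Filter
open scoped ENNReal Topology

noncomputable section

/-- The dyadic interval `I_{rl} = [2^{-r} l, 2^{-r}(l+1)]`. -/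
def Idy (r l : ℤ) : Set ℝ := Icc ((2 : ℝ) ^ (-r) * l) ((2 : ℝ) ^ (-r) * (l + 1))

/-- The assumptions on `β`: nonnegative, bounded, even, integrable, decreasing on `[0, ∞)`,
and `β(2^j x) ≤ 2^{4-j} β(x)` for `|x| ≥ 1` and integers `j ≥ 0`. -/
def BetaHyp (β : ℝ → ℝ) : Prop :=
  (∀ x, 0 ≤ β x) ∧ (∃ M : ℝ, ∀ x, β x ≤ M) ∧ (∀ x, β (-x) = β x) ∧
  Integrable β volume ∧ AntitoneOn β (Ici 0) ∧
  (∀ (j : ℕ) (x : ℝ), 1 ≤ |x| → β ((2 : ℝ) ^ j * x) ≤ (2 : ℝ) ^ ((4 : ℤ) - j) * β x)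




/-- `(u+v)^k ≤ 2^k (u^k + v^k)` in `ℝ≥0∞`. -/
lemma ennpow_add_le (k : ℕ) (u v : ℝ≥0∞) : (u + v) ^ k ≤ 2 ^ k * (u ^ k + v ^ k) := by
  rcases le_total u v with h | h
  · calc (u + v) ^ k ≤ (v + v) ^ k := by gcongr
    _ = 2 ^ k * v ^ k := by rw [← two_mul, mul_pow]
    _ ≤ 2 ^ k * (u ^ k + v ^ k) := by gcongr; exact le_add_self
  · calc (u + v) ^ k ≤ (u + u) ^ k := by gcongr
    _ = 2 ^ k * u ^ k := by rw [← two_mul, mul_pow]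
    _ ≤ 2 ^ k * (u ^ k + v ^ k) := by gcongr; exact le_self_add

/-- Abel-type tail bound: `S^{m+1} ≤ 2^m ∑_ρ x_ρ (tail_ρ)^m` in `ℝ≥0∞`. -/
lemma lemP (x : ℤ → ℝ≥0∞) (m : ℕ) :
    (∑' ρ, x ρ) ^ (m + 1) ≤
      2 ^ m * ∑' ρ, x ρ * (∑' ρ', if ρ ≤ ρ' then x ρ' else 0) ^ m := by
  set T : ℤ → ℝ≥0∞ := fun ρ => ∑' ρ', if ρ ≤ ρ' then x ρ' else 0 with hT
  have htail_anti : ∀ {ρ₁ ρ₂ : ℤ}, ρ₁ ≤ ρ₂ → T ρ₂ ≤ T ρ₁ := by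
    intro ρ₁ ρ₂ h
    refine Summable.tsum_le_tsum (fun ρ' => ?_) ENNReal.summable ENNReal.summable
    split_ifs with h1 h2
    · exact le_rfl
    · exact absurd (h.trans h1) h2
    · exact zero_le
    · exact le_rfl
  have hsplit : ∀ ρ : ℤ, (∑' ρ', x ρ') = (∑' ρ', if ρ' < ρ then x ρ' else 0) + T ρ := by
    intro ρ
    rw [← ENNReal.tsum_add]
    refine tsum_congr fun ρ' => ?_
    rcases lt_or_ge ρ' ρ with h | h
    · rw [if_pos h, if_neg (by omega), add_zero]
    · rw [if_neg (by omega), if_pos h, zero_add]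
  induction m with
  | zero => simp [T]
  | succ m ih =>
    have step : (∑' ρ, x ρ) ^ (m + 1 + 1) ≤
        2 ^ m * ∑' ρ, (x ρ * T ρ ^ m * (∑' ρ', x ρ')) := by
      rw [pow_succ]
      calc (∑' ρ, x ρ) ^ (m + 1) * (∑' ρ, x ρ)
          ≤ (2 ^ m * ∑' ρ, x ρ * T ρ ^ m) * (∑' ρ, x ρ) := by gcongr
      _ = 2 ^ m * ∑' ρ, (x ρ * T ρ ^ m * (∑' ρ', x ρ')) := by
          rw [mul_assoc, ENNReal.tsum_mul_right]
    refine step.trans ?_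
    have expand : ∀ ρ : ℤ, x ρ * T ρ ^ m * (∑' ρ', x ρ')
        = (∑' ρ', (if ρ' < ρ then x ρ * T ρ ^ m * x ρ' else 0)) + x ρ * T ρ ^ (m + 1) := by
      intro ρ
      rw [hsplit ρ, mul_add]
      congr 1
      · calc x ρ * T ρ ^ m * (∑' ρ', if ρ' < ρ then x ρ' else 0)
            = ∑' ρ', x ρ * T ρ ^ m * (if ρ' < ρ then x ρ' else 0) :=
              (ENNReal.tsum_mul_left).symm
        _ = ∑' ρ', (if ρ' < ρ then x ρ * T ρ ^ m * x ρ' else 0) := by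
              refine tsum_congr fun ρ' => ?_; split_ifs <;> simp
      · rw [pow_succ]; ring
    have key : (∑' ρ, (x ρ * T ρ ^ m * (∑' ρ', x ρ'))) ≤ 2 * ∑' ρ, x ρ * T ρ ^ (m + 1) := by
      have double_le : (∑' ρ, ∑' ρ', (if ρ' < ρ then x ρ * T ρ ^ m * x ρ' else 0))
          ≤ ∑' ρ, x ρ * T ρ ^ (m + 1) := by
        rw [ENNReal.tsum_comm]
        refine Summable.tsum_le_tsum (fun ρ' => ?_) ENNReal.summable ENNReal.summable
        calc (∑' ρ, if ρ' < ρ then x ρ * T ρ ^ m * x ρ' else 0)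
            ≤ ∑' ρ, (if ρ' + 1 ≤ ρ then x ρ else 0) * (T ρ' ^ m * x ρ') := by
              refine Summable.tsum_le_tsum (fun ρ => ?_) ENNReal.summable ENNReal.summable
              split_ifs with h1 h2
              · have hTT : T ρ ≤ T ρ' := htail_anti (le_of_lt h1)
                calc x ρ * T ρ ^ m * x ρ' ≤ x ρ * T ρ' ^ m * x ρ' := by gcongr
                _ = x ρ * (T ρ' ^ m * x ρ') := by ring
              · exact absurd (by omega : ρ' + 1 ≤ ρ) h2
              · exact absurd (by omega : ρ' < ρ) h1
              · simp
        _ = (∑' ρ, if ρ' + 1 ≤ ρ then x ρ else 0) * (T ρ' ^ m * x ρ') := by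
              rw [ENNReal.tsum_mul_right]
        _ ≤ T ρ' * (T ρ' ^ m * x ρ') := by
              gcongr
              exact htail_anti (by omega)
        _ = x ρ' * T ρ' ^ (m + 1) := by rw [pow_succ]; ring
      calc (∑' ρ, (x ρ * T ρ ^ m * (∑' ρ', x ρ')))
          = (∑' ρ, ∑' ρ', (if ρ' < ρ then x ρ * T ρ ^ m * x ρ' else 0)) +
            ∑' ρ, x ρ * T ρ ^ (m + 1) := by
            rw [← ENNReal.tsum_add]; exact tsum_congr expand
      _ ≤ (∑' ρ, x ρ * T ρ ^ (m + 1)) + ∑' ρ, x ρ * T ρ ^ (m + 1) :=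
            add_le_add_left double_le _
      _ = 2 * ∑' ρ, x ρ * T ρ ^ (m + 1) := by rw [two_mul]
    calc 2 ^ m * ∑' ρ, (x ρ * T ρ ^ m * (∑' ρ', x ρ'))
        ≤ 2 ^ m * (2 * ∑' ρ, x ρ * T ρ ^ (m + 1)) := by gcongr
    _ = 2 ^ (m + 1) * ∑' ρ, x ρ * T ρ ^ (m + 1) := by rw [pow_succ]; ring

/-- Sum of integrals over pairwise disjoint sets is at most the full integral. -/
lemma sum_restrict_le {ι : Type} [Countable ι] (A : ι → Set ℝ)
    (hm : ∀ i, MeasurableSet (A i)) (hd : Pairwise (Function.onFun Disjoint A))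
    (f : ℝ → ℝ≥0∞) (hf : Measurable f) :
    ∑' i, ∫⁻ s in A i, f s ≤ ∫⁻ s, f s := by
  classical
  have h1 : ∀ i, ∫⁻ s in A i, f s = ∫⁻ s, (A i).indicator f s := by
    intro i; rw [lintegral_indicator (hm i)]
  calc ∑' i, ∫⁻ s in A i, f s = ∑' i, ∫⁻ s, (A i).indicator f s := by
        exact tsum_congr h1
  _ = ∫⁻ s, ∑' i, (A i).indicator f s := by
        rw [lintegral_tsum (fun i => (hf.indicator (hm i)).aemeasurable)]
  _ ≤ ∫⁻ s, f s := by
        refine lintegral_mono fun s => ?_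
        by_cases h : ∃ i, s ∈ A i
        · obtain ⟨i₀, hi₀⟩ := h
          calc (∑' i, (A i).indicator f s) ≤ ∑' i, (if i = i₀ then f s else 0) := by
                refine Summable.tsum_le_tsum (fun i => ?_) ENNReal.summable ENNReal.summable
                by_cases hii : i = i₀
                · subst hii; rw [if_pos rfl]; exact Set.indicator_apply_le fun _ => le_rfl
                · rw [if_neg hii, Set.indicator_apply_eq_zero.2]
                  intro hs
                  exact absurd hi₀ (Set.disjoint_left.mp (hd hii) hs)
          _ = f s := tsum_ite_eq i₀ (fun _ => f s)
        · push_neg at h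
          have hz : ∀ i, (A i).indicator f s = 0 := fun i =>
            Set.indicator_apply_eq_zero.2 fun hs => absurd hs (h i)
          simp [hz]




def czf (β : ℝ → ℝ) (M : ℝ) : ℤ → ℝ≥0∞ := fun d =>
  if d < 0 then 0 else if d = 0 then ENNReal.ofReal M else ENNReal.ofReal (β ((2:ℝ) ^ (d - 1)))

def aq (q : ℤ × ℤ) : ℝ := (2:ℝ) ^ (-q.1) * q.2

def Vwin (q : ℤ × ℤ) (ρ : ℤ) : Set ℝ := Ioo (aq q - (2:ℝ) ^ (-ρ)) (aq q + (2:ℝ) ^ (-ρ))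

open scoped Classical in
def Wf (β : ℝ → ℝ) (M : ℝ) (S' : Set (ℤ × ℤ)) (ρ : ℤ) (t : ℝ) : ℝ≥0∞ :=
  ∑' q : ℤ × ℤ, (if q ∈ S' then 1 else 0) * czf β M (q.1 - ρ) * (Vwin q ρ).indicator 1 t

def TTf (β : ℝ → ℝ) (M : ℝ) (S' : Set (ℤ × ℤ)) (ρ₀ : ℤ) (t : ℝ) : ℝ≥0∞ :=
  ∑' ρ : ℤ, if ρ₀ ≤ ρ then Wf β M S' ρ t else 0

def Kc : ℕ → ℝ≥0∞ → ℝ≥0∞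
  | 0, _ => 8
  | (j+1), L => 2 ^ j * 16 * L * Kc j L

lemma czf_ne_top (β : ℝ → ℝ) (M : ℝ) (d : ℤ) : czf β M d ≠ ⊤ := by
  unfold czf; split_ifs <;> simp

lemma meas_Wf (β : ℝ → ℝ) (M : ℝ) (S' : Set (ℤ × ℤ)) (ρ : ℤ) :
    Measurable (Wf β M S' ρ) := by
  apply Measurable.ennreal_tsum
  intro q
  exact (measurable_const.indicator measurableSet_Ioo).const_mul _

lemma meas_TTf (β : ℝ → ℝ) (M : ℝ) (S' : Set (ℤ × ℤ)) (ρ₀ : ℤ) :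
    Measurable (TTf β M S' ρ₀) := by
  apply Measurable.ennreal_tsum
  intro ρ
  split_ifs
  · exact meas_Wf β M S' ρ
  · exact measurable_const

/-- The key induction: local integrals of powers of `TTf`. -/
lemma claim_bound (β : ℝ → ℝ) (M : ℝ) (S' : Set (ℤ × ℤ))
    (hdisj : S'.Pairwise fun q q' =>
      Disjoint (interior (Idy q.1 q.2)) (interior (Idy q'.1 q'.2)))
    (LL : ℝ≥0∞)
    (hLam : ∑' d : ℤ, czf β M d * ENNReal.ofReal ((2:ℝ) ^ d) ≤ LL) (j : ℕ) :
    ∀ (ρ₀ : ℤ) (x : ℝ),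
      ∫⁻ t in Ioo (x - 4 * (2:ℝ) ^ (-ρ₀)) (x + 4 * (2:ℝ) ^ (-ρ₀)), (TTf β M S' ρ₀ t) ^ j
        ≤ Kc j LL * ENNReal.ofReal ((2:ℝ) ^ (-ρ₀)) := by
  induction j with
  | zero =>
    intro ρ₀ x
    have hc : (0:ℝ) < (2:ℝ) ^ (-ρ₀) := zpow_pos two_pos _
    simp only [pow_zero]
    rw [setLIntegral_one, Real.volume_Ioo]
    have h1 : x + 4 * (2:ℝ) ^ (-ρ₀) - (x - 4 * (2:ℝ) ^ (-ρ₀)) = 8 * (2:ℝ) ^ (-ρ₀) := by ring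
    rw [h1, ENNReal.ofReal_mul (by norm_num), ENNReal.ofReal_ofNat,
      show Kc 0 LL = 8 from rfl]
  | succ j ih =>
    intro ρ₀ x
    classical
    set c : ℝ := (2:ℝ) ^ (-ρ₀) with hcdef
    have hc : (0:ℝ) < c := zpow_pos two_pos _
    set B : Set ℝ := Ioo (x - 4 * c) (x + 4 * c) with hBdef
    set B2 : Set ℝ := Ioo (x - 8 * c) (x + 8 * c) with hB2def
    set E : ℤ → ℝ≥0∞ := fun ρ => ENNReal.ofReal ((2:ℝ) ^ (-ρ)) with hEdef
    set Dq : ℤ × ℤ → ℝ≥0∞ :=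
      fun q => if q ∈ S' ∧ interior (Idy q.1 q.2) ⊆ B2 then 1 else 0 with hDqdef
    -- pointwise bound via lemP
    have hpoint : ∀ t, TTf β M S' ρ₀ t ^ (j+1) ≤
        2 ^ j * ∑' ρ : ℤ, (if ρ₀ ≤ ρ then Wf β M S' ρ t * (TTf β M S' ρ t) ^ j else 0) := by
      intro t
      have hP := lemP (fun ρ => if ρ₀ ≤ ρ then Wf β M S' ρ t else 0) j
      have hTT : TTf β M S' ρ₀ t = ∑' ρ, (if ρ₀ ≤ ρ then Wf β M S' ρ t else 0) := rfl
      rw [hTT]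
      refine hP.trans ?_
      gcongr with ρ
      by_cases hρ : ρ₀ ≤ ρ
      · simp only [if_pos hρ]
        have htail : (∑' ρ', if ρ ≤ ρ' then (if ρ₀ ≤ ρ' then Wf β M S' ρ' t else 0) else 0)
            = TTf β M S' ρ t := by
          refine tsum_congr fun ρ' => ?_
          by_cases h1 : ρ ≤ ρ'
          · simp only [if_pos h1, if_pos (hρ.trans h1)]
          · simp only [if_neg h1]
        rw [htail]
      · simp [hρ]
    -- per (ρ, q) bound
    have hperq : ∀ (ρ : ℤ) (q : ℤ × ℤ), ρ₀ ≤ ρ →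
        (if q ∈ S' then (1:ℝ≥0∞) else 0) * czf β M (q.1 - ρ) *
          (∫⁻ t in B, (Vwin q ρ).indicator 1 t * (TTf β M S' ρ t) ^ j)
        ≤ Dq q * (czf β M (q.1 - ρ) * (Kc j LL * E ρ)) := by
      intro ρ q hρ
      by_cases hq1 : q ∈ S'
      swap
      · simp [hq1]
      by_cases hq2 : q.1 - ρ < 0
      · have h0 : czf β M (q.1 - ρ) = 0 := by unfold czf; rw [if_pos hq2]
        simp [h0]
      push_neg at hq2
      have hρr : ρ ≤ q.1 := by omega
      have hVmeas : MeasurableSet (Vwin q ρ) := measurableSet_Ioo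
      have hBmeas : MeasurableSet B := measurableSet_Ioo
      have hind : (fun t => (Vwin q ρ).indicator 1 t * (TTf β M S' ρ t) ^ j)
          = fun t => (Vwin q ρ).indicator (fun s => (TTf β M S' ρ s) ^ j) t := by
        funext t
        by_cases ht : t ∈ Vwin q ρ
        · simp [Set.indicator_of_mem ht]
        · simp [Set.indicator_of_notMem ht]
      have hintrw : (∫⁻ t in B, (Vwin q ρ).indicator 1 t * (TTf β M S' ρ t) ^ j)
          = ∫⁻ t in B ∩ Vwin q ρ, (TTf β M S' ρ t) ^ j := by
        rw [hind, ← lintegral_indicator hBmeas, Set.indicator_indicator,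
          lintegral_indicator (hBmeas.inter hVmeas)]
      rw [hintrw]
      by_cases hq3 : (Vwin q ρ ∩ B).Nonempty
      swap
      · have hBe : B ∩ Vwin q ρ = ∅ := by
          rw [Set.not_nonempty_iff_eq_empty] at hq3
          rw [Set.inter_comm]; exact hq3
        rw [hBe]
        simp
      -- geometry : the interval is inside B2
      have hzle : (2:ℝ) ^ (-q.1) ≤ (2:ℝ) ^ (-ρ) := by
        apply zpow_le_zpow_right₀ one_le_two; omega
      have hzle0 : (2:ℝ) ^ (-ρ) ≤ c := by
        rw [hcdef]; apply zpow_le_zpow_right₀ one_le_two; omega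
      have hcontain : interior (Idy q.1 q.2) ⊆ B2 := by
        obtain ⟨y, hyV, hyB⟩ := hq3
        intro z hz
        rw [Idy, interior_Icc] at hz
        have hz2 : z < aq q + (2:ℝ) ^ (-q.1) := by
          have : (2:ℝ) ^ (-q.1) * (q.2 + 1) = aq q + (2:ℝ) ^ (-q.1) := by
            rw [aq]; ring
          rw [← this]; exact hz.2
        have hz1 : aq q < z := hz.1
        have hv1 : aq q - (2:ℝ) ^ (-ρ) < y := hyV.1
        have hv2 : y < aq q + (2:ℝ) ^ (-ρ) := hyV.2
        have hb1 : x - 4 * c < y := hyB.1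
        have hb2 : y < x + 4 * c := hyB.2
        constructor
        · show x - 8 * c < z; linarith
        · show z < x + 8 * c; linarith
      -- apply induction hypothesis
      have hIH := ih ρ (aq q)
      have hp2 : (0:ℝ) < (2:ℝ) ^ (-ρ) := zpow_pos two_pos _
      have hsub : B ∩ Vwin q ρ ⊆ Ioo (aq q - 4 * (2:ℝ)^(-ρ)) (aq q + 4 * (2:ℝ)^(-ρ)) := by
        intro t ht
        exact ⟨by linarith [ht.2.1], by linarith [ht.2.2]⟩
      have hIB : (∫⁻ t in B ∩ Vwin q ρ, (TTf β M S' ρ t) ^ j) ≤ Kc j LL * E ρ := by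
        refine le_trans (lintegral_mono' (Measure.restrict_mono hsub le_rfl) le_rfl) hIH
      have hDq1 : Dq q = 1 := by rw [hDqdef]; simp only []; rw [if_pos ⟨hq1, hcontain⟩]
      rw [hDq1, if_pos hq1, one_mul, one_mul]
      exact mul_le_mul_right hIB _
    -- main chain
    have hmeas_summand : ∀ ρ : ℤ, Measurable fun t =>
        (if ρ₀ ≤ ρ then Wf β M S' ρ t * (TTf β M S' ρ t) ^ j else 0) := by
      intro ρ
      split_ifs
      · exact (meas_Wf β M S' ρ).mul ((meas_TTf β M S' ρ).pow_const j)
      · exact measurable_const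
    have hperρ : ∀ ρ : ℤ,
        (∫⁻ t in B, (if ρ₀ ≤ ρ then Wf β M S' ρ t * (TTf β M S' ρ t) ^ j else 0))
        ≤ ∑' q : ℤ × ℤ, Dq q * (czf β M (q.1 - ρ) * (Kc j LL * E ρ)) := by
      intro ρ
      by_cases hρ : ρ₀ ≤ ρ
      · simp only [if_pos hρ]
        have hexp : ∀ t, Wf β M S' ρ t * (TTf β M S' ρ t) ^ j
            = ∑' q : ℤ × ℤ, ((if q ∈ S' then (1:ℝ≥0∞) else 0) * czf β M (q.1 - ρ)) *
                ((Vwin q ρ).indicator 1 t * (TTf β M S' ρ t) ^ j) := by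
          intro t
          rw [show Wf β M S' ρ t = ∑' q : ℤ × ℤ, (if q ∈ S' then (1:ℝ≥0∞) else 0)
              * czf β M (q.1 - ρ) * (Vwin q ρ).indicator 1 t from rfl,
            ← ENNReal.tsum_mul_right]
          exact tsum_congr fun q => by ring
        calc (∫⁻ t in B, Wf β M S' ρ t * (TTf β M S' ρ t) ^ j)
            = ∫⁻ t in B, ∑' q : ℤ × ℤ, ((if q ∈ S' then (1:ℝ≥0∞) else 0) * czf β M (q.1 - ρ)) *
                ((Vwin q ρ).indicator 1 t * (TTf β M S' ρ t) ^ j) :=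
              lintegral_congr hexp
        _ = ∑' q : ℤ × ℤ, ∫⁻ t in B, ((if q ∈ S' then (1:ℝ≥0∞) else 0) * czf β M (q.1 - ρ)) *
                ((Vwin q ρ).indicator 1 t * (TTf β M S' ρ t) ^ j) := by
              refine lintegral_tsum fun q => ?_
              refine (Measurable.const_mul ?_ _).aemeasurable
              exact (measurable_const.indicator measurableSet_Ioo).mul
                ((meas_TTf β M S' ρ).pow_const j)
        _ = ∑' q : ℤ × ℤ, ((if q ∈ S' then (1:ℝ≥0∞) else 0) * czf β M (q.1 - ρ)) *
                ∫⁻ t in B, ((Vwin q ρ).indicator 1 t * (TTf β M S' ρ t) ^ j) := by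
              refine tsum_congr fun q => ?_
              refine lintegral_const_mul' _ _ ?_
              exact ENNReal.mul_ne_top (by split_ifs <;> simp) (czf_ne_top β M _)
        _ ≤ ∑' q : ℤ × ℤ, Dq q * (czf β M (q.1 - ρ) * (Kc j LL * E ρ)) := by
              refine Summable.tsum_le_tsum (fun q => ?_) ENNReal.summable ENNReal.summable
              have := hperq ρ q hρ
              calc ((if q ∈ S' then (1:ℝ≥0∞) else 0) * czf β M (q.1 - ρ)) *
                    ∫⁻ t in B, ((Vwin q ρ).indicator 1 t * (TTf β M S' ρ t) ^ j)
                  = (if q ∈ S' then (1:ℝ≥0∞) else 0) * czf β M (q.1 - ρ) *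
                    ∫⁻ t in B, ((Vwin q ρ).indicator 1 t * (TTf β M S' ρ t) ^ j) := by ring
              _ ≤ Dq q * (czf β M (q.1 - ρ) * (Kc j LL * E ρ)) := hperq ρ q hρ
      · simp only [if_neg hρ]
        simp
    -- sum over ρ of the coefficients
    have hSUMCZ : ∀ q : ℤ × ℤ,
        (∑' ρ : ℤ, czf β M (q.1 - ρ) * E ρ) ≤ E q.1 * LL := by
      intro q
      have h1 : ∀ ρ : ℤ, czf β M (q.1 - ρ) * E ρ
          = E q.1 * (czf β M (q.1 - ρ) * ENNReal.ofReal ((2:ℝ) ^ (q.1 - ρ))) := by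
        intro ρ
        have h2 : ((2:ℝ) ^ (-ρ) : ℝ) = (2:ℝ) ^ (-q.1) * (2:ℝ) ^ (q.1 - ρ) := by
          rw [← zpow_add₀ (two_ne_zero)]
          congr 1
          ring
        rw [hEdef]
        simp only []
        rw [h2, ENNReal.ofReal_mul (by positivity)]
        ring
      calc (∑' ρ : ℤ, czf β M (q.1 - ρ) * E ρ)
          = E q.1 * ∑' ρ : ℤ, (czf β M (q.1 - ρ) * ENNReal.ofReal ((2:ℝ) ^ (q.1 - ρ))) := by
            rw [← ENNReal.tsum_mul_left]; exact tsum_congr h1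
      _ = E q.1 * ∑' d : ℤ, (czf β M d * ENNReal.ofReal ((2:ℝ) ^ d)) := by
            congr 1
            exact (Equiv.subLeft q.1).tsum_eq fun d => czf β M d * ENNReal.ofReal ((2:ℝ) ^ d)
      _ ≤ E q.1 * LL := mul_le_mul_right hLam _
    -- packing
    have hPACK : (∑' q : ℤ × ℤ, Dq q * E q.1) ≤ 16 * ENNReal.ofReal c := by
      set A : ℤ × ℤ → Set ℝ := fun q =>
        if q ∈ S' ∧ interior (Idy q.1 q.2) ⊆ B2 then interior (Idy q.1 q.2) else ∅ with hA
      have hvol : ∀ q, Dq q * E q.1 = volume (A q) := by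
        intro q
        by_cases h : q ∈ S' ∧ interior (Idy q.1 q.2) ⊆ B2
        · simp only [hDqdef, hA, if_pos h, one_mul]
          rw [Idy, interior_Icc, Real.volume_Ioo, hEdef]
          congr 1
          ring
        · simp only [hDqdef, hA, if_neg h]
          simp
      have hmeasA : ∀ q, MeasurableSet (A q) := by
        intro q
        simp only [hA]
        split_ifs
        · exact isOpen_interior.measurableSet
        · exact MeasurableSet.empty
      have hdA : Pairwise (Function.onFun Disjoint A) := by
        intro q q' hne
        simp only [Function.onFun, hA]
        split_ifs with h1 h2 h2
        · exact hdisj h1.1 h2.1 hne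
        · exact Set.disjoint_empty _
        · exact Set.empty_disjoint _
        · exact Set.empty_disjoint _
      calc (∑' q : ℤ × ℤ, Dq q * E q.1) = ∑' q : ℤ × ℤ, volume (A q) := tsum_congr hvol
      _ = volume (⋃ q, A q) := (measure_iUnion hdA hmeasA).symm
      _ ≤ volume B2 := by
            refine measure_mono (Set.iUnion_subset fun q => ?_)
            simp only [hA]
            split_ifs with h
            · exact h.2
            · exact Set.empty_subset _
      _ = 16 * ENNReal.ofReal c := by
            rw [hB2def, Real.volume_Ioo]
            rw [show x + 8 * c - (x - 8 * c) = 16 * c by ring,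
              ENNReal.ofReal_mul (by norm_num), ENNReal.ofReal_ofNat]
    -- assemble
    calc (∫⁻ t in B, TTf β M S' ρ₀ t ^ (j+1))
        ≤ ∫⁻ t in B, 2 ^ j * ∑' ρ : ℤ,
            (if ρ₀ ≤ ρ then Wf β M S' ρ t * (TTf β M S' ρ t) ^ j else 0) :=
          lintegral_mono fun t => hpoint t
    _ = 2 ^ j * ∫⁻ t in B, ∑' ρ : ℤ,
            (if ρ₀ ≤ ρ then Wf β M S' ρ t * (TTf β M S' ρ t) ^ j else 0) :=
          lintegral_const_mul' _ _ (ENNReal.pow_ne_top ENNReal.ofNat_ne_top)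
    _ = 2 ^ j * ∑' ρ : ℤ, ∫⁻ t in B,
            (if ρ₀ ≤ ρ then Wf β M S' ρ t * (TTf β M S' ρ t) ^ j else 0) := by
          rw [lintegral_tsum fun ρ => (hmeas_summand ρ).aemeasurable]
    _ ≤ 2 ^ j * ∑' ρ : ℤ, ∑' q : ℤ × ℤ, Dq q * (czf β M (q.1 - ρ) * (Kc j LL * E ρ)) := by
          exact mul_le_mul_right (Summable.tsum_le_tsum hperρ ENNReal.summable ENNReal.summable) _
    _ = 2 ^ j * ∑' q : ℤ × ℤ, ∑' ρ : ℤ, Dq q * (czf β M (q.1 - ρ) * (Kc j LL * E ρ)) := by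
          rw [ENNReal.tsum_comm]
    _ = 2 ^ j * ∑' q : ℤ × ℤ, (Dq q * Kc j LL) * ∑' ρ : ℤ, (czf β M (q.1 - ρ) * E ρ) := by
          congr 1
          refine tsum_congr fun q => ?_
          rw [← ENNReal.tsum_mul_left]
          exact tsum_congr fun ρ => by ring
    _ ≤ 2 ^ j * ∑' q : ℤ × ℤ, (Dq q * Kc j LL) * (E q.1 * LL) := by
          refine mul_le_mul_right (Summable.tsum_le_tsum (fun q => ?_) ENNReal.summable
            ENNReal.summable) _
          exact mul_le_mul_right (hSUMCZ q) _
    _ = 2 ^ j * ((Kc j LL * LL) * ∑' q : ℤ × ℤ, Dq q * E q.1) := by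
          congr 1
          rw [tsum_congr (fun q => show (Dq q * Kc j LL) * (E q.1 * LL)
            = (Kc j LL * LL) * (Dq q * E q.1) from by ring), ENNReal.tsum_mul_left]
    _ ≤ 2 ^ j * ((Kc j LL * LL) * (16 * ENNReal.ofReal c)) :=
          mul_le_mul_right (mul_le_mul_right hPACK _) _
    _ = Kc (j+1) LL * ENNReal.ofReal c := by
          rw [show Kc (j+1) LL = 2 ^ j * 16 * LL * Kc j LL from rfl]
          ring



lemma Kc_ne_top {L : ℝ≥0∞} (hL : L ≠ ⊤) : ∀ j, Kc j L ≠ ⊤ := by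
  intro j
  induction j with
  | zero => simp [Kc]
  | succ j ih =>
    rw [show Kc (j+1) L = 2 ^ j * 16 * L * Kc j L from rfl]
    exact ENNReal.mul_ne_top (ENNReal.mul_ne_top (ENNReal.mul_ne_top
      (ENNReal.pow_ne_top ENNReal.ofNat_ne_top) (by norm_num)) hL) ih

open scoped Classical in
/-- pointwise window decomposition for a single dyadic term -/
lemma ptw (β : ℝ → ℝ) (M : ℝ) (S' : Set (ℤ × ℤ))
    (hM : ∀ x, β x ≤ M)
    (hβle : ∀ u v : ℝ, |u| ≤ |v| → β v ≤ β u)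
    (hdec : ∀ (j : ℕ) (x : ℝ), 1 ≤ |x| → β ((2:ℝ)^j * x) ≤ (2:ℝ)^((4:ℤ) - j) * β x)
    (q : ℤ × ℤ) (hq : q ∈ S') (hr : 0 ≤ q.1) (t : ℝ) :
    ENNReal.ofReal (β ((2:ℝ)^q.1 * t - q.2)) ≤
      (if 1 ≤ |t - aq q| then ENNReal.ofReal ((2:ℝ)^((4:ℤ) - q.1) * β (t - aq q)) else 0)
      + ∑' ρ : ℤ, (if (0:ℤ) ≤ ρ then
          (if q ∈ S' then (1:ℝ≥0∞) else 0) * czf β M (q.1 - ρ) *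
            (Vwin q ρ).indicator 1 t else 0) := by
  classical
  have h2r : (2:ℝ)^q.1 * (2:ℝ)^(-q.1) = 1 := by
    rw [← zpow_add₀ (two_ne_zero : (2:ℝ) ≠ 0)]; simp
  have harg : (2:ℝ)^q.1 * t - (q.2 : ℝ) = (2:ℝ)^q.1 * (t - aq q) := by
    rw [aq, mul_sub, ← mul_assoc, h2r, one_mul]
  rcases lt_or_ge |t - aq q| ((2:ℝ)^(-q.1)) with hcase1 | hrest
  · -- near: ρ = q.1
    have habs := abs_lt.1 hcase1
    have hmem : t ∈ Vwin q q.1 :=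
      ⟨by linarith [habs.1], by linarith [habs.2]⟩
    have hterm : (if (0:ℤ) ≤ q.1 then
        (if q ∈ S' then (1:ℝ≥0∞) else 0) * czf β M (q.1 - q.1) *
          (Vwin q q.1).indicator 1 t else 0) = ENNReal.ofReal M := by
      rw [if_pos hr, if_pos hq, sub_self,
        show czf β M 0 = ENNReal.ofReal M from by unfold czf; norm_num,
        Set.indicator_of_mem hmem]
      simp
    refine le_add_left ?_
    calc ENNReal.ofReal (β ((2:ℝ)^q.1 * t - q.2)) ≤ ENNReal.ofReal M :=
          ENNReal.ofReal_le_ofReal (hM _)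
    _ = _ := hterm.symm
    _ ≤ _ := ENNReal.le_tsum q.1
  rcases lt_or_ge |t - aq q| 1 with hcase2 | hfar
  · -- middle
    set u := t - aq q with hu
    have hu0 : 0 < |u| := lt_of_lt_of_le (zpow_pos two_pos _) hrest
    set e := Int.log 2 |u| with he
    have hle : ((2:ℕ):ℝ)^e ≤ |u| := Int.zpow_log_le_self (by norm_num) hu0
    have hlt : |u| < ((2:ℕ):ℝ)^(e+1) := Int.lt_zpow_succ_log_self (by norm_num) _
    push_cast at hle hlt
    have he1 : e + 1 ≤ 0 := by
      by_contra hcon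
      push_neg at hcon
      have h1 : (1:ℝ) ≤ (2:ℝ)^e := by
        calc (1:ℝ) = (2:ℝ)^(0:ℤ) := by simp
        _ ≤ (2:ℝ)^e := zpow_le_zpow_right₀ one_le_two (by omega)
      linarith
    have her : -q.1 ≤ e := by
      by_contra hcon
      push_neg at hcon
      have h1 : (2:ℝ)^(e+1) ≤ (2:ℝ)^(-q.1) := zpow_le_zpow_right₀ one_le_two (by omega)
      linarith
    set ρ : ℤ := -(e+1) with hρdef
    have hρ0 : (0:ℤ) ≤ ρ := by omega
    have habs : |u| < (2:ℝ)^(-ρ) := by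
      rw [show -ρ = e + 1 from by omega]; exact hlt
    have habs' := abs_lt.1 habs
    have hmem : t ∈ Vwin q ρ := ⟨by linarith [habs'.1], by linarith [habs'.2]⟩
    have hczf : czf β M (q.1 - ρ) = ENNReal.ofReal (β ((2:ℝ)^(q.1 - ρ - 1))) := by
      unfold czf; rw [if_neg (by omega), if_neg (by omega)]
    have hbound : β ((2:ℝ)^q.1 * u) ≤ β ((2:ℝ)^(q.1 - ρ - 1)) := by
      apply hβle
      rw [abs_of_pos (zpow_pos two_pos _), abs_mul, abs_of_pos (zpow_pos two_pos q.1)]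
      calc (2:ℝ)^(q.1 - ρ - 1) = (2:ℝ)^q.1 * (2:ℝ)^e := by
            rw [← zpow_add₀ (two_ne_zero : (2:ℝ) ≠ 0)]; congr 1; omega
      _ ≤ (2:ℝ)^q.1 * |u| := by
            exact mul_le_mul_of_nonneg_left hle (le_of_lt (zpow_pos two_pos _))
    have hterm : (if (0:ℤ) ≤ ρ then
        (if q ∈ S' then (1:ℝ≥0∞) else 0) * czf β M (q.1 - ρ) *
          (Vwin q ρ).indicator 1 t else 0)
        = ENNReal.ofReal (β ((2:ℝ)^(q.1 - ρ - 1))) := by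
      rw [if_pos hρ0, if_pos hq, hczf, Set.indicator_of_mem hmem]
      simp
    refine le_add_left ?_
    calc ENNReal.ofReal (β ((2:ℝ)^q.1 * t - q.2))
        = ENNReal.ofReal (β ((2:ℝ)^q.1 * u)) := by rw [harg]
    _ ≤ ENNReal.ofReal (β ((2:ℝ)^(q.1 - ρ - 1))) := ENNReal.ofReal_le_ofReal hbound
    _ = _ := hterm.symm
    _ ≤ _ := ENNReal.le_tsum ρ
  · -- far
    rw [if_pos hfar]
    refine le_add_right ?_
    rw [harg]
    have hpow : (2:ℝ)^(q.1.toNat) = (2:ℝ)^(q.1) := by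
      rw [← zpow_natCast, Int.toNat_of_nonneg hr]
    have hd := hdec q.1.toNat (t - aq q) hfar
    rw [hpow, Int.toNat_of_nonneg hr] at hd
    exact ENNReal.ofReal_le_ofReal hd


lemma lint_scale (β : ℝ → ℝ) (hmeasβ : Measurable β) (t : ℝ) :
    ∫⁻ s : ℝ, ENNReal.ofReal (β ((t - s)/2)) = 2 * ∫⁻ s : ℝ, ENNReal.ofReal (β s) := by
  have hg : Measurable fun y : ℝ => ENNReal.ofReal (β (y/2)) :=
    (hmeasβ.comp (measurable_id.div_const 2)).ennreal_ofReal
  have hmp : MeasurePreserving (fun s : ℝ => t - s) volume volume := by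
    have ha := Measure.measurePreserving_neg (volume : Measure ℝ)
    have hb := measurePreserving_add_left (volume : Measure ℝ) t
    simpa [Function.comp_def, sub_eq_add_neg] using hb.comp ha
  have h1 : ∫⁻ s : ℝ, ENNReal.ofReal (β ((t - s)/2)) = ∫⁻ y : ℝ, ENNReal.ofReal (β (y/2)) :=
    hmp.lintegral_comp hg
  have hmap : Measure.map (fun y : ℝ => (2:ℝ)⁻¹ * y) volume
      = ENNReal.ofReal |((2:ℝ)⁻¹)⁻¹| • volume := Real.map_volume_mul_left (by norm_num)
  have h2 : ∫⁻ y : ℝ, ENNReal.ofReal (β (y/2)) = 2 * ∫⁻ s : ℝ, ENNReal.ofReal (β s) := by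
    have hb : Measurable fun s : ℝ => ENNReal.ofReal (β s) := hmeasβ.ennreal_ofReal
    calc ∫⁻ y : ℝ, ENNReal.ofReal (β (y/2))
        = ∫⁻ y : ℝ, ENNReal.ofReal (β ((2:ℝ)⁻¹ * y)) := by
          congr 1; funext y; rw [div_eq_inv_mul]
    _ = ∫⁻ y, ENNReal.ofReal (β y) ∂(Measure.map (fun y : ℝ => (2:ℝ)⁻¹ * y) volume) :=
          (lintegral_map hb (measurable_const_mul _)).symm
    _ = ∫⁻ y, ENNReal.ofReal (β y) ∂(ENNReal.ofReal |((2:ℝ)⁻¹)⁻¹| • volume) := by rw [hmap]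
    _ = 2 * ∫⁻ s : ℝ, ENNReal.ofReal (β s) := by
          rw [lintegral_smul_measure]
          norm_num
  rw [h1, h2]


open scoped Classical in
/-- far-field bound -/
lemma far_sum_le (β : ℝ → ℝ) (M : ℝ) (S' : Set (ℤ × ℤ))
    (hdisj : S'.Pairwise fun q q' =>
      Disjoint (interior (Idy q.1 q.2)) (interior (Idy q'.1 q'.2)))
    (hS0 : ∀ q ∈ S', 0 ≤ q.1)
    (hmeasβ : Measurable β)
    (hβle : ∀ u v : ℝ, |u| ≤ |v| → β v ≤ β u) (t : ℝ) :
    (∑' q : ℤ × ℤ, (if q ∈ S' then (1:ℝ≥0∞) else 0) *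
      (if 1 ≤ |t - aq q| then ENNReal.ofReal ((2:ℝ)^((4:ℤ) - q.1) * β (t - aq q)) else 0))
    ≤ 32 * ∫⁻ s : ℝ, ENNReal.ofReal (β s) := by
  set Aset : ℤ × ℤ → Set ℝ := fun q =>
    if q ∈ S' then interior (Idy q.1 q.2) else ∅ with hAset
  have hmA : ∀ q, MeasurableSet (Aset q) := by
    intro q; simp only [hAset]; split_ifs
    · exact isOpen_interior.measurableSet
    · exact MeasurableSet.empty
  have hdA : Pairwise (Function.onFun Disjoint Aset) := by
    intro q q' hne
    simp only [Function.onFun, hAset]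
    split_ifs with h1 h2 h2
    · exact hdisj h1 h2 hne
    · exact Set.disjoint_empty _
    · exact Set.empty_disjoint _
    · exact Set.empty_disjoint _
  have hbhat_meas : Measurable fun s : ℝ => ENNReal.ofReal (β ((t - s)/2)) :=
    (hmeasβ.comp ((measurable_const.sub measurable_id).div_const 2)).ennreal_ofReal
  have hper : ∀ q : ℤ × ℤ, (if q ∈ S' then (1:ℝ≥0∞) else 0) *
      (if 1 ≤ |t - aq q| then ENNReal.ofReal ((2:ℝ)^((4:ℤ) - q.1) * β (t - aq q)) else 0)
      ≤ 16 * ∫⁻ s in Aset q, ENNReal.ofReal (β ((t - s)/2)) := by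
    intro q
    by_cases hq : q ∈ S'
    swap
    · simp [hq]
    rw [if_pos hq, one_mul]
    by_cases hfar : 1 ≤ |t - aq q|
    swap
    · rw [if_neg hfar]; exact zero_le
    rw [if_pos hfar]
    have hr : 0 ≤ q.1 := hS0 q hq
    have hh1 : (2:ℝ)^(-q.1) ≤ 1 := by
      calc (2:ℝ)^(-q.1) ≤ (2:ℝ)^(0:ℤ) := zpow_le_zpow_right₀ one_le_two (by omega)
      _ = 1 := by simp
    have hAq : Aset q = interior (Idy q.1 q.2) := by simp only [hAset, if_pos hq]
    have hpt : ∀ s ∈ interior (Idy q.1 q.2),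
        ENNReal.ofReal (β (t - aq q)) ≤ ENNReal.ofReal (β ((t - s)/2)) := by
      intro s hs
      rw [Idy, interior_Icc] at hs
      apply ENNReal.ofReal_le_ofReal
      apply hβle
      have h1 : aq q < s := hs.1
      have h2 : s < aq q + (2:ℝ)^(-q.1) := by
        have he : (2:ℝ)^(-q.1) * ((q.2:ℝ) + 1) = aq q + (2:ℝ)^(-q.1) := by
          rw [aq]; ring
        rw [← he]; exact hs.2
      have h3 : |t - s| ≤ |t - aq q| + |s - aq q| := by
        have e1 : t - s = (t - aq q) - (s - aq q) := by ring
        rw [e1]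
        exact abs_sub _ _
      have h4 : |s - aq q| ≤ 1 := by
        rw [abs_of_pos (by linarith)]
        linarith
      have h5 : |(t - s)/2| = |t - s|/2 := by
        rw [abs_div]; norm_num
      rw [h5, div_le_iff₀ (by norm_num : (0:ℝ) < 2)]
      linarith
    have hvol : volume (interior (Idy q.1 q.2)) = ENNReal.ofReal ((2:ℝ)^(-q.1)) := by
      rw [Idy, interior_Icc, Real.volume_Ioo]
      congr 1
      ring
    have hz : (2:ℝ)^((4:ℤ)-q.1) = 16 * (2:ℝ)^(-q.1) := by
      rw [show (4:ℤ) - q.1 = 4 + (-q.1) from by ring, zpow_add₀ (two_ne_zero : (2:ℝ) ≠ 0)]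
      norm_num
    calc ENNReal.ofReal ((2:ℝ)^((4:ℤ)-q.1) * β (t - aq q))
        = 16 * (ENNReal.ofReal ((2:ℝ)^(-q.1)) * ENNReal.ofReal (β (t - aq q))) := by
          rw [hz, mul_assoc, ENNReal.ofReal_mul (by norm_num),
            ENNReal.ofReal_mul (zpow_nonneg (by norm_num) _), ENNReal.ofReal_ofNat]
    _ ≤ 16 * ∫⁻ s in Aset q, ENNReal.ofReal (β ((t - s)/2)) := by
          refine mul_le_mul_right ?_ _
          rw [hAq]
          calc ENNReal.ofReal ((2:ℝ)^(-q.1)) * ENNReal.ofReal (β (t - aq q))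
              = ENNReal.ofReal (β (t - aq q)) * volume (interior (Idy q.1 q.2)) := by
                rw [hvol]; ring
          _ = ∫⁻ _ in interior (Idy q.1 q.2), ENNReal.ofReal (β (t - aq q)) :=
                (setLIntegral_const _ _).symm
          _ ≤ ∫⁻ s in interior (Idy q.1 q.2), ENNReal.ofReal (β ((t - s)/2)) :=
                setLIntegral_mono hbhat_meas hpt
  calc (∑' q : ℤ × ℤ, (if q ∈ S' then (1:ℝ≥0∞) else 0) *
      (if 1 ≤ |t - aq q| then ENNReal.ofReal ((2:ℝ)^((4:ℤ) - q.1) * β (t - aq q)) else 0))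
      ≤ ∑' q : ℤ × ℤ, 16 * ∫⁻ s in Aset q, ENNReal.ofReal (β ((t - s)/2)) :=
        Summable.tsum_le_tsum hper ENNReal.summable ENNReal.summable
  _ = 16 * ∑' q : ℤ × ℤ, ∫⁻ s in Aset q, ENNReal.ofReal (β ((t - s)/2)) :=
        ENNReal.tsum_mul_left
  _ ≤ 16 * ∫⁻ s : ℝ, ENNReal.ofReal (β ((t - s)/2)) :=
        mul_le_mul_right (sum_restrict_le Aset hmA hdA _ hbhat_meas) _
  _ = 16 * (2 * ∫⁻ s : ℝ, ENNReal.ofReal (β s)) := by rw [lint_scale β hmeasβ t]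
  _ = 32 * ∫⁻ s : ℝ, ENNReal.ofReal (β s) := by ring


/-- bound on the coefficient sum -/
lemma lam_le (β : ℝ → ℝ) (M : ℝ)
    (hβ0 : ∀ x, 0 ≤ β x)
    (hmeasβ : Measurable β)
    (hβle : ∀ u v : ℝ, |u| ≤ |v| → β v ≤ β u) :
    ∑' d : ℤ, czf β M d * ENNReal.ofReal ((2:ℝ)^d)
      ≤ ENNReal.ofReal M + 4 * ∫⁻ s : ℝ, ENNReal.ofReal (β s) := by
  classical
  have hb : Measurable fun s : ℝ => ENNReal.ofReal (β s) := hmeasβ.ennreal_ofReal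
  set J : ℤ → Set ℝ := fun d =>
    if 1 ≤ d then Ico ((2:ℝ)^(d-2)) ((2:ℝ)^(d-1)) else ∅ with hJ
  have hmJ : ∀ d, MeasurableSet (J d) := by
    intro d; simp only [hJ]; split_ifs
    · exact measurableSet_Ico
    · exact MeasurableSet.empty
  have hdJ : Pairwise (Function.onFun Disjoint J) := by
    intro d d' hne
    simp only [Function.onFun, hJ]
    split_ifs with h1 h2 h2
    · rcases lt_or_gt_of_ne hne with h | h
      · refine Set.Ico_disjoint_Ico.2 ?_
        calc min ((2:ℝ)^(d-1)) ((2:ℝ)^(d'-1)) ≤ (2:ℝ)^(d-1) := min_le_left _ _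
        _ ≤ (2:ℝ)^(d'-2) := zpow_le_zpow_right₀ one_le_two (by omega)
        _ ≤ max ((2:ℝ)^(d-2)) ((2:ℝ)^(d'-2)) := le_max_right _ _
      · refine Set.Ico_disjoint_Ico.2 ?_
        calc min ((2:ℝ)^(d-1)) ((2:ℝ)^(d'-1)) ≤ (2:ℝ)^(d'-1) := min_le_right _ _
        _ ≤ (2:ℝ)^(d-2) := zpow_le_zpow_right₀ one_le_two (by omega)
        _ ≤ max ((2:ℝ)^(d-2)) ((2:ℝ)^(d'-2)) := le_max_left _ _
    · exact Set.disjoint_empty _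
    · exact Set.empty_disjoint _
    · exact Set.empty_disjoint _
  have hper : ∀ d : ℤ, czf β M d * ENNReal.ofReal ((2:ℝ)^d)
      ≤ (if d = 0 then ENNReal.ofReal M else 0) + 4 * ∫⁻ s in J d, ENNReal.ofReal (β s) := by
    intro d
    rcases lt_trichotomy d 0 with h | h | h
    · have h0 : czf β M d = 0 := by unfold czf; rw [if_pos h]
      simp [h0]
    · subst h
      have h0 : czf β M 0 = ENNReal.ofReal M := by unfold czf; norm_num
      rw [h0]
      simp only [if_pos rfl]
      calc ENNReal.ofReal M * ENNReal.ofReal ((2:ℝ)^(0:ℤ))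
          = ENNReal.ofReal M := by norm_num
      _ ≤ _ := le_self_add
    · have h1 : ¬ d < 0 := by omega
      have h2 : d ≠ 0 := by omega
      have h3 : 1 ≤ d := by omega
      have hczd : czf β M d = ENNReal.ofReal (β ((2:ℝ)^(d-1))) := by
        unfold czf; rw [if_neg h1, if_neg h2]
      have hJd : J d = Ico ((2:ℝ)^(d-2)) ((2:ℝ)^(d-1)) := by
        simp only [hJ, if_pos h3]
      rw [hczd, if_neg h2, zero_add, hJd]
      have hpt : ∀ s ∈ Ico ((2:ℝ)^(d-2)) ((2:ℝ)^(d-1)),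
          ENNReal.ofReal (β ((2:ℝ)^(d-1))) ≤ ENNReal.ofReal (β s) := by
        intro s hs
        have hs0 : (0:ℝ) ≤ s := le_trans (le_of_lt (zpow_pos two_pos _)) hs.1
        apply ENNReal.ofReal_le_ofReal
        apply hβle
        rw [abs_of_nonneg hs0, abs_of_pos (zpow_pos two_pos _)]
        exact le_of_lt hs.2
      have hzz : (2:ℝ)^d = 4 * (2:ℝ)^(d-2) := by
        rw [show (4:ℝ) = (2:ℝ)^(2:ℤ) from by norm_num,
          ← zpow_add₀ (two_ne_zero : (2:ℝ) ≠ 0)]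
        congr 1
        ring
      have hvol : ((2:ℝ)^(d-1) - (2:ℝ)^(d-2)) = (2:ℝ)^(d-2) := by
        rw [show d - 1 = 1 + (d-2) from by ring, zpow_add₀ (two_ne_zero : (2:ℝ) ≠ 0)]
        ring
      calc ENNReal.ofReal (β ((2:ℝ)^(d-1))) * ENNReal.ofReal ((2:ℝ)^d)
          = 4 * (ENNReal.ofReal (β ((2:ℝ)^(d-1))) * ENNReal.ofReal ((2:ℝ)^(d-2))) := by
            rw [hzz, ENNReal.ofReal_mul (by norm_num), ENNReal.ofReal_ofNat]
            ring
      _ ≤ 4 * ∫⁻ s in Ico ((2:ℝ)^(d-2)) ((2:ℝ)^(d-1)), ENNReal.ofReal (β s) := by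
            refine mul_le_mul_right ?_ _
            calc ENNReal.ofReal (β ((2:ℝ)^(d-1))) * ENNReal.ofReal ((2:ℝ)^(d-2))
                = ENNReal.ofReal (β ((2:ℝ)^(d-1))) *
                    volume (Ico ((2:ℝ)^(d-2)) ((2:ℝ)^(d-1))) := by
                  rw [Real.volume_Ico, hvol]
            _ = ∫⁻ _ in Ico ((2:ℝ)^(d-2)) ((2:ℝ)^(d-1)),
                  ENNReal.ofReal (β ((2:ℝ)^(d-1))) := (setLIntegral_const _ _).symm
            _ ≤ _ := setLIntegral_mono hb hpt
  calc ∑' d : ℤ, czf β M d * ENNReal.ofReal ((2:ℝ)^d)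
      ≤ ∑' d : ℤ, ((if d = 0 then ENNReal.ofReal M else 0)
          + 4 * ∫⁻ s in J d, ENNReal.ofReal (β s)) :=
        Summable.tsum_le_tsum hper ENNReal.summable ENNReal.summable
  _ = (∑' d : ℤ, (if d = 0 then ENNReal.ofReal M else 0))
      + ∑' d : ℤ, 4 * ∫⁻ s in J d, ENNReal.ofReal (β s) := ENNReal.tsum_add
  _ ≤ ENNReal.ofReal M + 4 * ∫⁻ s : ℝ, ENNReal.ofReal (β s) := by
      refine add_le_add (le_of_eq (tsum_ite_eq (0:ℤ) _)) ?_
      rw [ENNReal.tsum_mul_left]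
      exact mul_le_mul_right (sum_restrict_le J hmJ hdJ _ hb) _

/-- A uniform bound for the integrals
`∫ β(t) (Σ_{(r,l) ∈ S'} β(2^r t - l))^k dt` over all families `S'` of dyadic intervals with
pairwise disjoint interiors and nonnegative scales `r ≥ 0`. -/
theorem beta_sum_integral_bound (β : ℝ → ℝ) (hβ : BetaHyp β) (k : ℕ) :
    ∃ C > (0 : ℝ), ∀ S' : Set (ℤ × ℤ),
      (S'.Pairwise fun q q' =>
        Disjoint (interior (Idy q.1 q.2)) (interior (Idy q'.1 q'.2))) →
      (∀ q ∈ S', 0 ≤ q.1) →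
      ∫⁻ t, ENNReal.ofReal (β t) *
          (∑' (q : S'), ENNReal.ofReal (β ((2 : ℝ) ^ (q : ℤ × ℤ).1 * t - (q : ℤ × ℤ).2))) ^ k
        ≤ ENNReal.ofReal C := by
  classical
  obtain ⟨hβ0, hMex, heven, hint, hanti, hdec⟩ := hβ
  obtain ⟨M, hM⟩ := hMex
  have βabs : ∀ v : ℝ, β |v| = β v := by
    intro v
    rcases le_or_gt 0 v with h | h
    · rw [abs_of_nonneg h]
    · rw [abs_of_neg h, heven]
  have hβle : ∀ u v : ℝ, |u| ≤ |v| → β v ≤ β u := by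
    intro u v h
    rw [← βabs u, ← βabs v]
    exact hanti (mem_Ici.2 (abs_nonneg u)) (mem_Ici.2 (abs_nonneg v)) h
  have hmeasβ : Measurable β := by
    have h1 : Antitone fun y : ℝ => β (max y 0) := by
      intro y z h
      exact hanti (mem_Ici.2 (le_max_right y 0)) (mem_Ici.2 (le_max_right z 0))
        (max_le_max h le_rfl)
    have h2 : β = fun t : ℝ => β (max |t| 0) := by
      funext t
      rw [max_eq_left (abs_nonneg t), βabs]
    rw [h2]
    exact h1.measurable.comp measurable_abs
  have hmeasbE : Measurable fun s : ℝ => ENNReal.ofReal (β s) := hmeasβ.ennreal_ofReal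
  set Ae : ℝ≥0∞ := ∫⁻ s : ℝ, ENNReal.ofReal (β s) with hAe
  have hAfin : Ae ≠ ⊤ := by
    have h1 : Ae ≤ ∫⁻ s : ℝ, (‖β s‖₊ : ℝ≥0∞) :=
      lintegral_mono fun s => Real.ofReal_le_enorm _
    exact ne_top_of_le_ne_top hint.2.ne h1
  have hM0 : 0 ≤ M := le_trans (hβ0 0) (hM 0)
  set LL : ℝ≥0∞ := ENNReal.ofReal M + 4 * Ae with hLL
  have hLLfin : LL ≠ ⊤ :=
    ENNReal.add_ne_top.2 ⟨ENNReal.ofReal_ne_top,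
      ENNReal.mul_ne_top (by norm_num) hAfin⟩
  have hLam : ∑' d : ℤ, czf β M d * ENNReal.ofReal ((2:ℝ)^d) ≤ LL :=
    lam_le β M hβ0 hmeasβ hβle
  set Ck : ℝ≥0∞ := 2^k * ((32*Ae)^k * Ae + (2*ENNReal.ofReal M + Ae) * Kc k LL) with hCk
  have hCkfin : Ck ≠ ⊤ := by
    refine ENNReal.mul_ne_top (ENNReal.pow_ne_top ENNReal.ofNat_ne_top) ?_
    refine ENNReal.add_ne_top.2 ⟨?_, ?_⟩
    · exact ENNReal.mul_ne_top (ENNReal.pow_ne_top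
        (ENNReal.mul_ne_top (by norm_num) hAfin)) hAfin
    · refine ENNReal.mul_ne_top ?_ (Kc_ne_top hLLfin k)
      exact ENNReal.add_ne_top.2 ⟨ENNReal.mul_ne_top (by norm_num)
        ENNReal.ofReal_ne_top, hAfin⟩
  refine ⟨Ck.toReal + 1, by positivity, ?_⟩
  intro S' hdisj hS0
  have hclaim := claim_bound β M S' hdisj LL hLam
  have hTTmeas := meas_TTf β M S' 0
  -- pointwise domination of the whole sum
  have hS_le : ∀ t : ℝ,
      (∑' (q : S'), ENNReal.ofReal (β ((2 : ℝ) ^ (q : ℤ × ℤ).1 * t - (q : ℤ × ℤ).2)))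
        ≤ 32 * Ae + TTf β M S' 0 t := by
    intro t
    rw [tsum_subtype S' (fun q : ℤ × ℤ => ENNReal.ofReal (β ((2:ℝ)^q.1 * t - q.2)))]
    calc (∑' q : ℤ × ℤ,
        S'.indicator (fun q : ℤ × ℤ => ENNReal.ofReal (β ((2:ℝ)^q.1 * t - q.2))) q)
        ≤ ∑' q : ℤ × ℤ,
            ((if q ∈ S' then (1:ℝ≥0∞) else 0) *
              (if 1 ≤ |t - aq q| then
                ENNReal.ofReal ((2:ℝ)^((4:ℤ) - q.1) * β (t - aq q)) else 0)
            + ∑' ρ : ℤ, (if (0:ℤ) ≤ ρ then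
                (if q ∈ S' then (1:ℝ≥0∞) else 0) * czf β M (q.1 - ρ) *
                  (Vwin q ρ).indicator 1 t else 0)) := by
          refine Summable.tsum_le_tsum (fun q => ?_) ENNReal.summable ENNReal.summable
          by_cases hq : q ∈ S'
          · rw [Set.indicator_of_mem hq]
            simpa [hq] using ptw β M S' hM hβle hdec q hq (hS0 q hq) t
          · rw [Set.indicator_of_notMem hq]
            exact zero_le
    _ = (∑' q : ℤ × ℤ, (if q ∈ S' then (1:ℝ≥0∞) else 0) *
          (if 1 ≤ |t - aq q| then
            ENNReal.ofReal ((2:ℝ)^((4:ℤ) - q.1) * β (t - aq q)) else 0))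
        + ∑' q : ℤ × ℤ, ∑' ρ : ℤ, (if (0:ℤ) ≤ ρ then
            (if q ∈ S' then (1:ℝ≥0∞) else 0) * czf β M (q.1 - ρ) *
              (Vwin q ρ).indicator 1 t else 0) := ENNReal.tsum_add
    _ ≤ 32 * Ae + TTf β M S' 0 t := by
        refine add_le_add (far_sum_le β M S' hdisj hS0 hmeasβ hβle t) (le_of_eq ?_)
        rw [ENNReal.tsum_comm]
        refine tsum_congr fun ρ => ?_
        by_cases hρ : (0:ℤ) ≤ ρ
        · simp only [if_pos hρ]
          rfl
        · simp only [if_neg hρ, tsum_zero]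
  -- integral of b * TT^k over ℝ via unit intervals
  set en : ℤ → ℝ := fun n => if 0 ≤ n then (n:ℝ) else (-(n:ℝ)-1) with hen
  have hn_bound : ∀ n : ℤ, (∫⁻ t in Ico ((n:ℝ)) ((n:ℝ)+1),
      ENNReal.ofReal (β t) * TTf β M S' 0 t ^ k)
      ≤ ENNReal.ofReal (β (en n)) * Kc k LL := by
    intro n
    have hbE_le : ∀ t ∈ Ico ((n:ℝ)) ((n:ℝ)+1),
        ENNReal.ofReal (β t) ≤ ENNReal.ofReal (β (en n)) := by
      intro t ht
      apply ENNReal.ofReal_le_ofReal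
      apply hβle
      rcases le_or_gt 0 n with h | h
      · have h0 : (0:ℝ) ≤ (n:ℝ) := by exact_mod_cast h
        rw [hen]; simp only [if_pos h]
        rw [abs_of_nonneg h0]
        exact le_trans ht.1 (le_abs_self t)
      · have h1 : (n:ℝ) + 1 ≤ 0 := by exact_mod_cast (by omega : n + 1 ≤ (0:ℤ))
        rw [hen]; simp only [if_neg (not_le.2 h)]
        have h2 : (0:ℝ) ≤ -(n:ℝ) - 1 := by linarith
        rw [abs_of_nonneg h2]
        have h3 : -(n:ℝ) - 1 ≤ -t := by linarith [ht.2]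
        exact le_trans h3 (neg_le_abs t)
    calc (∫⁻ t in Ico ((n:ℝ)) ((n:ℝ)+1), ENNReal.ofReal (β t) * TTf β M S' 0 t ^ k)
        ≤ ∫⁻ t in Ico ((n:ℝ)) ((n:ℝ)+1),
            ENNReal.ofReal (β (en n)) * TTf β M S' 0 t ^ k :=
          setLIntegral_mono ((hTTmeas.pow_const k).const_mul _)
            (fun t ht => mul_le_mul_left (hbE_le t ht) _)
    _ = ENNReal.ofReal (β (en n)) * ∫⁻ t in Ico ((n:ℝ)) ((n:ℝ)+1), TTf β M S' 0 t ^ k :=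
          lintegral_const_mul' _ _ ENNReal.ofReal_ne_top
    _ ≤ ENNReal.ofReal (β (en n)) * Kc k LL := by
          refine mul_le_mul_right ?_ _
          have h1 := hclaim k 0 ((n:ℝ))
          simp only [neg_zero, zpow_zero, ENNReal.ofReal_one, mul_one] at h1
          refine le_trans ?_ h1
          refine lintegral_mono' (Measure.restrict_mono ?_ le_rfl) le_rfl
          intro t ht
          constructor
          · linarith [ht.1]
          · linarith [ht.2]
  have hsumEn : (∑' n : ℤ, ENNReal.ofReal (β (en n))) ≤ 2 * ENNReal.ofReal M + Ae := by
    set J : ℤ → Set ℝ := fun n =>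
      if n = 0 ∨ n = -1 then ∅
      else if 1 ≤ n then Ico ((n:ℝ)-1) ((n:ℝ)) else Ico ((n:ℝ)+1) ((n:ℝ)+2) with hJ
    have hmJ : ∀ n, MeasurableSet (J n) := by
      intro n; simp only [hJ]; split_ifs
      · exact MeasurableSet.empty
      · exact measurableSet_Ico
      · exact measurableSet_Ico
    have hdJ : Pairwise (Function.onFun Disjoint J) := by
      intro n n' hne
      simp only [Function.onFun, hJ]
      by_cases e1 : n = 0 ∨ n = -1
      · rw [if_pos e1]; exact Set.empty_disjoint _
      rw [if_neg e1]
      by_cases e2 : n' = 0 ∨ n' = -1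
      · rw [if_pos e2]; exact Set.disjoint_empty _
      rw [if_neg e2]
      have he1 : n ≤ -2 ∨ 1 ≤ n := by omega
      have he2 : n' ≤ -2 ∨ 1 ≤ n' := by omega
      by_cases f1 : 1 ≤ n
      · by_cases f2 : 1 ≤ n'
        · rw [if_pos f1, if_pos f2]
          refine Set.Ico_disjoint_Ico.2 ?_
          rcases lt_or_gt_of_ne hne with h | h
          · have hc : (n:ℝ) ≤ (n':ℝ) - 1 := by
              have h' : ((n:ℤ):ℝ) ≤ ((n' - 1 : ℤ):ℝ) := by
                exact_mod_cast (by omega : n ≤ n' - 1)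
              push_cast at h'; linarith
            calc min ((n:ℝ)) ((n':ℝ)) ≤ (n:ℝ) := min_le_left _ _
            _ ≤ max ((n:ℝ)-1) ((n':ℝ)-1) := le_trans hc (le_max_right _ _)
          · have hc : (n':ℝ) ≤ (n:ℝ) - 1 := by
              have h' : ((n':ℤ):ℝ) ≤ ((n - 1 : ℤ):ℝ) := by
                exact_mod_cast (by omega : n' ≤ n - 1)
              push_cast at h'; linarith
            calc min ((n:ℝ)) ((n':ℝ)) ≤ (n':ℝ) := min_le_right _ _
            _ ≤ max ((n:ℝ)-1) ((n':ℝ)-1) := le_trans hc (le_max_left _ _)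
        · rw [if_pos f1, if_neg f2]
          have hn2 : n' ≤ -2 := by tauto
          refine Set.Ico_disjoint_Ico.2 ?_
          have hc1 : (n':ℝ) + 2 ≤ 0 := by
            have h' : ((n' + 2 : ℤ):ℝ) ≤ ((0:ℤ):ℝ) := by
              exact_mod_cast (by omega : n' + 2 ≤ (0:ℤ))
            push_cast at h'; linarith
          have hc2 : (0:ℝ) ≤ (n:ℝ) - 1 := by
            have h' : ((1:ℤ):ℝ) ≤ ((n:ℤ):ℝ) := by exact_mod_cast f1
            push_cast at h'; linarith
          calc min ((n:ℝ)) ((n':ℝ)+2) ≤ (n':ℝ)+2 := min_le_right _ _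
          _ ≤ max ((n:ℝ)-1) ((n':ℝ)+1) :=
            le_trans (le_trans hc1 hc2) (le_max_left _ _)
      · by_cases f2 : 1 ≤ n'
        · rw [if_neg f1, if_pos f2]
          have hn2 : n ≤ -2 := by tauto
          refine Set.Ico_disjoint_Ico.2 ?_
          have hc1 : (n:ℝ) + 2 ≤ 0 := by
            have h' : ((n + 2 : ℤ):ℝ) ≤ ((0:ℤ):ℝ) := by
              exact_mod_cast (by omega : n + 2 ≤ (0:ℤ))
            push_cast at h'; linarith
          have hc2 : (0:ℝ) ≤ (n':ℝ) - 1 := by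
            have h' : ((1:ℤ):ℝ) ≤ ((n':ℤ):ℝ) := by exact_mod_cast f2
            push_cast at h'; linarith
          calc min ((n:ℝ)+2) ((n':ℝ)) ≤ (n:ℝ)+2 := min_le_left _ _
          _ ≤ max ((n:ℝ)+1) ((n':ℝ)-1) :=
            le_trans (le_trans hc1 hc2) (le_max_right _ _)
        · rw [if_neg f1, if_neg f2]
          have hn2 : n ≤ -2 := by tauto
          have hn2' : n' ≤ -2 := by tauto
          refine Set.Ico_disjoint_Ico.2 ?_
          rcases lt_or_gt_of_ne hne with h | h
          · have hc : (n:ℝ) + 2 ≤ (n':ℝ) + 1 := by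
              have h' : ((n + 2 : ℤ):ℝ) ≤ ((n' + 1 : ℤ):ℝ) := by
                exact_mod_cast (by omega : n + 2 ≤ n' + 1)
              push_cast at h'; linarith
            calc min ((n:ℝ)+2) ((n':ℝ)+2) ≤ (n:ℝ)+2 := min_le_left _ _
            _ ≤ max ((n:ℝ)+1) ((n':ℝ)+1) := le_trans hc (le_max_right _ _)
          · have hc : (n':ℝ) + 2 ≤ (n:ℝ) + 1 := by
              have h' : ((n' + 2 : ℤ):ℝ) ≤ ((n + 1 : ℤ):ℝ) := by
                exact_mod_cast (by omega : n' + 2 ≤ n + 1)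
              push_cast at h'; linarith
            calc min ((n:ℝ)+2) ((n':ℝ)+2) ≤ (n':ℝ)+2 := min_le_right _ _
            _ ≤ max ((n:ℝ)+1) ((n':ℝ)+1) := le_trans hc (le_max_left _ _)
    have hper : ∀ n : ℤ, ENNReal.ofReal (β (en n)) ≤
        ((if n = 0 then ENNReal.ofReal M else 0) + (if n = -1 then ENNReal.ofReal M else 0))
        + ∫⁻ s in J n, ENNReal.ofReal (β s) := by
      intro n
      by_cases hn0 : n = 0
      · subst hn0
        have : ENNReal.ofReal (β (en 0)) ≤ ENNReal.ofReal M :=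
          ENNReal.ofReal_le_ofReal (hM _)
        refine le_trans this ?_
        simp only [if_pos rfl]
        exact le_add_right le_self_add
      by_cases hn1 : n = -1
      · subst hn1
        have : ENNReal.ofReal (β (en (-1))) ≤ ENNReal.ofReal M :=
          ENNReal.ofReal_le_ofReal (hM _)
        refine le_trans this ?_
        rw [if_neg hn0, if_pos rfl]
        exact le_add_right le_add_self
      have hJn : J n = if 1 ≤ n then Ico ((n:ℝ)-1) ((n:ℝ)) else Ico ((n:ℝ)+1) ((n:ℝ)+2) := by
        simp only [hJ, if_neg (by tauto : ¬(n = 0 ∨ n = -1))]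
      refine le_add_left ?_
      rcases le_or_gt 1 n with h1 | h1
      · -- n ≥ 1
        have h0 : (0:ℤ) ≤ n := by omega
        have hcast : (1:ℝ) ≤ (n:ℝ) := by exact_mod_cast h1
        have henn : en n = (n:ℝ) := by rw [hen]; simp only [if_pos h0]
        have hpt : ∀ s ∈ Ico ((n:ℝ)-1) ((n:ℝ)),
            ENNReal.ofReal (β (en n)) ≤ ENNReal.ofReal (β s) := by
          intro s hs
          apply ENNReal.ofReal_le_ofReal
          apply hβle
          rw [henn, abs_of_nonneg (by linarith [hs.1] : (0:ℝ) ≤ s),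
            abs_of_nonneg (by linarith : (0:ℝ) ≤ (n:ℝ))]
          exact le_of_lt hs.2
        rw [hJn, if_pos h1]
        calc ENNReal.ofReal (β (en n))
            = ENNReal.ofReal (β (en n)) * volume (Ico ((n:ℝ)-1) ((n:ℝ))) := by
              rw [Real.volume_Ico]
              norm_num
        _ = ∫⁻ _ in Ico ((n:ℝ)-1) ((n:ℝ)), ENNReal.ofReal (β (en n)) :=
              (setLIntegral_const _ _).symm
        _ ≤ ∫⁻ s in Ico ((n:ℝ)-1) ((n:ℝ)), ENNReal.ofReal (β s) :=
              setLIntegral_mono hmeasbE hpt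
      · -- n ≤ -2
        have h2 : n ≤ -2 := by omega
        have hcast : (n:ℝ) + 2 ≤ 0 := by
          have : ((n+2:ℤ):ℝ) ≤ ((0:ℤ):ℝ) := by exact_mod_cast (by omega : n + 2 ≤ (0:ℤ))
          push_cast at this; linarith
        have henn : en n = -(n:ℝ) - 1 := by
          rw [hen]; simp only [if_neg (by omega : ¬ (0:ℤ) ≤ n)]
        have hpt : ∀ s ∈ Ico ((n:ℝ)+1) ((n:ℝ)+2),
            ENNReal.ofReal (β (en n)) ≤ ENNReal.ofReal (β s) := by
          intro s hs
          apply ENNReal.ofReal_le_ofReal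
          apply hβle
          rw [henn, abs_of_nonneg (by linarith : (0:ℝ) ≤ -(n:ℝ) - 1),
            abs_of_nonpos (by linarith [hs.2] : s ≤ 0)]
          linarith [hs.1]
        rw [hJn, if_neg (not_le.2 h1)]
        calc ENNReal.ofReal (β (en n))
            = ENNReal.ofReal (β (en n)) * volume (Ico ((n:ℝ)+1) ((n:ℝ)+2)) := by
              rw [Real.volume_Ico]
              norm_num
        _ = ∫⁻ _ in Ico ((n:ℝ)+1) ((n:ℝ)+2), ENNReal.ofReal (β (en n)) :=
              (setLIntegral_const _ _).symm
        _ ≤ ∫⁻ s in Ico ((n:ℝ)+1) ((n:ℝ)+2), ENNReal.ofReal (β s) :=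
              setLIntegral_mono hmeasbE hpt
    calc (∑' n : ℤ, ENNReal.ofReal (β (en n)))
        ≤ ∑' n : ℤ, (((if n = 0 then ENNReal.ofReal M else 0)
            + (if n = -1 then ENNReal.ofReal M else 0))
            + ∫⁻ s in J n, ENNReal.ofReal (β s)) :=
          Summable.tsum_le_tsum hper ENNReal.summable ENNReal.summable
    _ = ((∑' n : ℤ, (if n = 0 then ENNReal.ofReal M else 0))
          + ∑' n : ℤ, (if n = -1 then ENNReal.ofReal M else 0))
        + ∑' n : ℤ, ∫⁻ s in J n, ENNReal.ofReal (β s) := by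
          rw [ENNReal.tsum_add, ENNReal.tsum_add]
    _ ≤ (ENNReal.ofReal M + ENNReal.ofReal M) + Ae := by
          refine add_le_add (add_le_add (le_of_eq (tsum_ite_eq (0:ℤ) _))
            (le_of_eq (tsum_ite_eq (-1:ℤ) _))) ?_
          exact sum_restrict_le J hmJ hdJ _ hmeasbE
    _ = 2 * ENNReal.ofReal M + Ae := by rw [two_mul]
  have hTTint : (∫⁻ t, ENNReal.ofReal (β t) * TTf β M S' 0 t ^ k)
      ≤ (2 * ENNReal.ofReal M + Ae) * Kc k LL := by
    have hcover : (⋃ n : ℤ, Ico ((n:ℝ)) ((n:ℝ)+1)) = univ := by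
      ext t
      simp only [mem_iUnion, mem_univ, iff_true]
      exact ⟨⌊t⌋, Int.floor_le t, Int.lt_floor_add_one t⟩
    have hdisjI : Pairwise (Function.onFun Disjoint fun n : ℤ => Ico ((n:ℝ)) ((n:ℝ)+1)) := by
      intro n n' hne
      simp only [Function.onFun]
      refine Set.Ico_disjoint_Ico.2 ?_
      rcases lt_or_gt_of_ne hne with h | h
      · have hh : (n:ℝ) + 1 ≤ (n':ℝ) := by exact_mod_cast (by omega : n + 1 ≤ n')
        calc min ((n:ℝ)+1) ((n':ℝ)+1) ≤ (n:ℝ)+1 := min_le_left _ _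
        _ ≤ max ((n:ℝ)) ((n':ℝ)) := le_trans hh (le_max_right _ _)
      · have hh : (n':ℝ) + 1 ≤ (n:ℝ) := by exact_mod_cast (by omega : n' + 1 ≤ n)
        calc min ((n:ℝ)+1) ((n':ℝ)+1) ≤ (n':ℝ)+1 := min_le_right _ _
        _ ≤ max ((n:ℝ)) ((n':ℝ)) := le_trans hh (le_max_left _ _)
    have hmeas_int : Measurable fun t => ENNReal.ofReal (β t) * TTf β M S' 0 t ^ k :=
      hmeasbE.mul (hTTmeas.pow_const k)
    calc (∫⁻ t, ENNReal.ofReal (β t) * TTf β M S' 0 t ^ k)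
        = ∫⁻ t in univ, ENNReal.ofReal (β t) * TTf β M S' 0 t ^ k :=
          (setLIntegral_univ _).symm
    _ = ∫⁻ t in ⋃ n : ℤ, Ico ((n:ℝ)) ((n:ℝ)+1),
          ENNReal.ofReal (β t) * TTf β M S' 0 t ^ k := by rw [hcover]
    _ = ∑' n : ℤ, ∫⁻ t in Ico ((n:ℝ)) ((n:ℝ)+1),
          ENNReal.ofReal (β t) * TTf β M S' 0 t ^ k :=
          lintegral_iUnion (fun n => measurableSet_Ico) hdisjI _
    _ ≤ ∑' n : ℤ, ENNReal.ofReal (β (en n)) * Kc k LL :=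
          Summable.tsum_le_tsum hn_bound ENNReal.summable ENNReal.summable
    _ = (∑' n : ℤ, ENNReal.ofReal (β (en n))) * Kc k LL := ENNReal.tsum_mul_right
    _ ≤ (2 * ENNReal.ofReal M + Ae) * Kc k LL := mul_le_mul_left hsumEn _
  -- final assembly
  calc (∫⁻ t, ENNReal.ofReal (β t) *
        (∑' (q : S'), ENNReal.ofReal (β ((2:ℝ)^(q : ℤ × ℤ).1 * t - (q : ℤ × ℤ).2))) ^ k)
      ≤ ∫⁻ t, ENNReal.ofReal (β t) * (32 * Ae + TTf β M S' 0 t) ^ k := by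
        refine lintegral_mono fun t => mul_le_mul_right ?_ _
        gcongr
        exact hS_le t
  _ ≤ ∫⁻ t, ENNReal.ofReal (β t) * (2^k * ((32*Ae)^k + TTf β M S' 0 t ^ k)) :=
        lintegral_mono fun t => mul_le_mul_right (ennpow_add_le k _ _) _
  _ = 2^k * ((32*Ae)^k * Ae + ∫⁻ t, ENNReal.ofReal (β t) * TTf β M S' 0 t ^ k) := by
        have hre : ∀ t : ℝ, ENNReal.ofReal (β t) * (2^k * ((32*Ae)^k + TTf β M S' 0 t ^ k))
            = 2^k * ((32*Ae)^k * ENNReal.ofReal (β t)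
              + ENNReal.ofReal (β t) * TTf β M S' 0 t ^ k) := by
          intro t; ring
        rw [lintegral_congr hre,
          lintegral_const_mul' _ _ (ENNReal.pow_ne_top ENNReal.ofNat_ne_top),
          lintegral_add_left (hmeasbE.const_mul _),
          lintegral_const_mul' _ _
            (ENNReal.pow_ne_top (ENNReal.mul_ne_top (by norm_num) hAfin))]
  _ ≤ 2^k * ((32*Ae)^k * Ae + (2 * ENNReal.ofReal M + Ae) * Kc k LL) := by
        exact mul_le_mul_right (add_le_add_right hTTint _) _
  _ = Ck := rfl
  _ ≤ ENNReal.ofReal (Ck.toReal + 1) := by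
        calc Ck = ENNReal.ofReal Ck.toReal := (ENNReal.ofReal_toReal hCkfin).symm
        _ ≤ ENNReal.ofReal (Ck.toReal + 1) := ENNReal.ofReal_le_ofReal (by linarith)


end
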